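/- Let u_1,…,u_r be nonnegative integers satisfying u_i ≤ u_1 + ⋯ + û_i + ⋯ + u_r for every i (the hat denoting omission) and u_1 + ⋯ + u_r ≡ 0 (mod 2). Then there exists a special r-gon in the Bruhat–Tits tree of PGL_2 over k((t)) with side lengths u_1,…,u_r; equivalently, writing K = PGL_2(k[[t]]) and μ_i for the dominant coweight (u_i,0) of PGL_2, the identity element lies in the product of double cosets Kμ_1K · Kμ_2K ⋯ Kμ_rK in PGL_2(k((t))). -/

import Mathlib

open scoped Classical

noncomputable section

/-- The projective linear group `PGL₂` over the Laurent series field `k((t))`. -/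
abbrev PGL2 (k : Type) [Field k] : Type :=
  (Matrix (Fin 2) (Fin 2) (LaurentSeries k))ˣ ⧸
    Subgroup.center ((Matrix (Fin 2) (Fin 2) (LaurentSeries k))ˣ)

/-- The uniformizer `t ∈ k((t))`. -/
def tvar (k : Type) [Field k] : LaurentSeries k := HahnSeries.single (1 : ℤ) (1 : k)

/-- The diagonal matrix `diag(t^u, 1)`, as an element of `GL₂(k((t)))`. -/
def diagT (k : Type) [Field k] (u : ℕ) : (Matrix (Fin 2) (Fin 2) (LaurentSeries k))ˣ :=
  Matrix.nonsingInvUnit (Matrix.diagonal ![tvar k ^ u, 1]) (by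
    have h : (Matrix.diagonal ![tvar k ^ u, 1] :
        Matrix (Fin 2) (Fin 2) (LaurentSeries k)).det ≠ 0 := by
      rw [Matrix.det_diagonal, Fin.prod_univ_two]
      simp only [Matrix.cons_val_zero, Matrix.cons_val_one, Matrix.head_cons, mul_one]
      exact pow_ne_zero _ (by
        simp only [tvar]
        exact HahnSeries.single_ne_zero (one_ne_zero (α := k)))
    exact h.isUnit)

/-- The projection `GL₂(k((t))) → PGL₂(k((t)))`. -/
def toPGL2 (k : Type) [Field k] :
    (Matrix (Fin 2) (Fin 2) (LaurentSeries k))ˣ →* PGL2 k :=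
  QuotientGroup.mk' _

/-- The maximal compact subgroup `K = PGL₂(k[[t]])`, i.e. the image in `PGL₂(k((t)))` of
`GL₂(k[[t]])`. -/
def Ksub (k : Type) [Field k] : Subgroup (PGL2 k) :=
  ((toPGL2 k).comp
    (Units.map (RingHom.toMonoidHom
      ((HahnSeries.ofPowerSeries ℤ k).mapMatrix :
        Matrix (Fin 2) (Fin 2) (PowerSeries k) →+* Matrix (Fin 2) (Fin 2) (LaurentSeries k))))).range

/-! ### Auxiliary material -/

section Aux

variable (k : Type) [Field k]

lemma tvar_ne_zero : tvar k ≠ 0 := HahnSeries.single_ne_zero one_ne_zero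

lemma diagT_val (u : ℕ) : (diagT k u).val = !![tvar k ^ u, 0; 0, 1] := by
  show Matrix.diagonal ![tvar k ^ u, 1] = _
  ext i j
  fin_cases i <;> fin_cases j <;> simp [Matrix.diagonal]

/-- `t` as a unit of `k((t))`. -/
def tu : (LaurentSeries k)ˣ := (Ne.isUnit (tvar_ne_zero k)).unit

/-- The central scalar unit `t^m · 1` in `GL₂(k((t)))`. -/
def Zu (m : ℕ) : (Matrix (Fin 2) (Fin 2) (LaurentSeries k))ˣ :=
  Units.map (Matrix.scalar (Fin 2)).toMonoidHom ((tu k) ^ m)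

lemma Zu_val (m : ℕ) : (Zu k m).val = Matrix.scalar (Fin 2) (tvar k ^ m) := by
  simp [Zu, Units.coe_map, Matrix.diagonal_pow, Matrix.scalar]
  rfl

lemma Zu_mem_center (m : ℕ) :
    Zu k m ∈ Subgroup.center ((Matrix (Fin 2) (Fin 2) (LaurentSeries k))ˣ) := by
  rw [Subgroup.mem_center_iff]
  intro g
  refine Units.ext ?_
  show (g.val) * (Zu k m).val = (Zu k m).val * g.val
  rw [Zu_val]
  have h := Matrix.scalar_commute (n := Fin 2) (tvar k ^ m) (fun r' => mul_comm _ _) g.val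
  exact h.eq.symm

lemma toPGL2_Zu (m : ℕ) : toPGL2 k (Zu k m) = 1 :=
  (QuotientGroup.eq_one_iff _).mpr (Zu_mem_center k m)

/-- The matrix ring hom `M₂(k[[t]]) → M₂(k((t)))`. -/
abbrev φM : Matrix (Fin 2) (Fin 2) (PowerSeries k) →+* Matrix (Fin 2) (Fin 2) (LaurentSeries k) :=
  (HahnSeries.ofPowerSeries ℤ k).mapMatrix

lemma φ_X_pow (m : ℕ) : (HahnSeries.ofPowerSeries ℤ k) (PowerSeries.X ^ m) = tvar k ^ m := by
  rw [map_pow, HahnSeries.ofPowerSeries_X]; rfl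

/-- Any integral unit lands in `Ksub` under `toPGL2`. -/
lemma toPGL2_map_mem_Ksub (M : (Matrix (Fin 2) (Fin 2) (PowerSeries k))ˣ) :
    toPGL2 k (Units.map (φM k).toMonoidHom M) ∈ Ksub k :=
  ⟨M, rfl⟩

def uX (m : ℕ) : (Matrix (Fin 2) (Fin 2) (PowerSeries k))ˣ :=
  Matrix.nonsingInvUnit !![0, 1; 1, PowerSeries.X ^ m] (by
    rw [Matrix.det_fin_two_of]; simp)

def uA (a : ℕ) : (Matrix (Fin 2) (Fin 2) (PowerSeries k))ˣ :=
  Matrix.nonsingInvUnit !![-1, PowerSeries.X ^ a; 0, 1] (by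
    rw [Matrix.det_fin_two_of]; simp)

def uB (b : ℕ) : (Matrix (Fin 2) (Fin 2) (PowerSeries k))ˣ :=
  Matrix.nonsingInvUnit !![1, 0; PowerSeries.X ^ b, 1] (by
    rw [Matrix.det_fin_two_of]; simp)

lemma map_uX (m : ℕ) :
    ((Units.map (φM k).toMonoidHom (uX k m)).val : Matrix (Fin 2) (Fin 2) (LaurentSeries k))
      = !![0, 1; 1, tvar k ^ m] := by
  show (φM k) !![0, 1; 1, PowerSeries.X ^ m] = _
  ext i j
  fin_cases i <;> fin_cases j <;> simp [RingHom.mapMatrix_apply, φ_X_pow]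

lemma map_uA (a : ℕ) :
    ((Units.map (φM k).toMonoidHom (uA k a)).val : Matrix (Fin 2) (Fin 2) (LaurentSeries k))
      = !![-1, tvar k ^ a; 0, 1] := by
  show (φM k) !![-1, PowerSeries.X ^ a; 0, 1] = _
  ext i j
  fin_cases i <;> fin_cases j <;> simp [RingHom.mapMatrix_apply, φ_X_pow]

lemma map_uB (b : ℕ) :
    ((Units.map (φM k).toMonoidHom (uB k b)).val : Matrix (Fin 2) (Fin 2) (LaurentSeries k))
      = !![1, 0; tvar k ^ b, 1] := by
  show (φM k) !![1, 0; PowerSeries.X ^ b, 1] = _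
  ext i j
  fin_cases i <;> fin_cases j <;> simp [RingHom.mapMatrix_apply, φ_X_pow]

set_option linter.unreachableTactic false in
set_option linter.unnecessarySeqFocus false in
set_option linter.unusedTactic false in
/-- The key Cartan-type identity in `GL₂(k((t)))`:
`diag(t^{m+a},1) · X · diag(t^{m+b},1) = t^m · (A · diag(t^{a+b},1) · B)` with `X, A, B`
integral. -/
lemma key_units (m a b : ℕ) :
    diagT k (m + a) * Units.map (φM k).toMonoidHom (uX k m) * diagT k (m + b)
      = Zu k m * (Units.map (φM k).toMonoidHom (uA k a) * diagT k (a + b)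
          * Units.map (φM k).toMonoidHom (uB k b)) := by
  refine Units.ext ?_
  show (diagT k (m+a)).val * _ * (diagT k (m+b)).val
      = (Zu k m).val * ((Units.map (φM k).toMonoidHom (uA k a)).val * (diagT k (a+b)).val
          * (Units.map (φM k).toMonoidHom (uB k b)).val)
  rw [diagT_val, diagT_val, diagT_val, Zu_val, map_uX, map_uA, map_uB]
  refine Matrix.ext fun i j => ?_
  fin_cases i <;> fin_cases j <;>
    simp [Matrix.mul_apply, Fin.sum_univ_two, Matrix.scalar, Matrix.diagonal, pow_add] <;>
    (first | ring1 | (ring_nf; tauto) | tauto)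

/-- The double coset `K μ_u K` as a set. -/
def DC (u : ℕ) : Set (PGL2 k) :=
  { g | ∃ a b : PGL2 k, a ∈ Ksub k ∧ b ∈ Ksub k ∧ g = a * toPGL2 k (diagT k u) * b }

lemma key_pgl (m a b : ℕ) :
    toPGL2 k (diagT k (m + a)) * toPGL2 k (Units.map (φM k).toMonoidHom (uX k m))
        * toPGL2 k (diagT k (m + b))
      = toPGL2 k (Units.map (φM k).toMonoidHom (uA k a)) * toPGL2 k (diagT k (a + b))
          * toPGL2 k (Units.map (φM k).toMonoidHom (uB k b)) := by
  have h := congrArg (toPGL2 k) (key_units k m a b)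
  simpa [map_mul, toPGL2_Zu, mul_assoc] using h

lemma diagT_zero_pgl : toPGL2 k (diagT k 0) = 1 := by
  have : diagT k 0 = 1 := by
    refine Units.ext ?_
    rw [diagT_val]
    simp [Matrix.one_fin_two]
  rw [this, map_one]

lemma one_mem_DC_zero : (1 : PGL2 k) ∈ DC k 0 :=
  ⟨1, 1, one_mem _, one_mem _, by simp [diagT_zero_pgl]⟩

/-- The splitting lemma: any element of `K μ_c K` is a product of elements of
`K μ_a K` and `K μ_b K`, provided `c + 2m = a + b` with `m ≤ a`, `m ≤ b`. -/
lemma split_DC (a b c m : ℕ) (hc : c + 2 * m = a + b) (hma : m ≤ a) (hmb : m ≤ b)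
    {g : PGL2 k} (hg : g ∈ DC k c) :
    ∃ g₁ g₂ : PGL2 k, g₁ ∈ DC k a ∧ g₂ ∈ DC k b ∧ g = g₁ * g₂ := by
  obtain ⟨A, B, hA, hB, rfl⟩ := hg
  set α := a - m with hα
  set β := b - m with hβ
  have ha : a = m + α := by omega
  have hb : b = m + β := by omega
  have hcab : c = α + β := by omega
  set KX := toPGL2 k (Units.map (φM k).toMonoidHom (uX k m)) with hKX
  set KA := toPGL2 k (Units.map (φM k).toMonoidHom (uA k α)) with hKA
  set KB := toPGL2 k (Units.map (φM k).toMonoidHom (uB k β)) with hKB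
  have hKXm : KX ∈ Ksub k := toPGL2_map_mem_Ksub k _
  have hKAm : KA ∈ Ksub k := toPGL2_map_mem_Ksub k _
  have hKBm : KB ∈ Ksub k := toPGL2_map_mem_Ksub k _
  have hk : toPGL2 k (diagT k c)
      = KA⁻¹ * (toPGL2 k (diagT k a) * KX * toPGL2 k (diagT k b)) * KB⁻¹ := by
    rw [ha, hb, hcab, key_pgl k m α β]
    rw [← hKA, ← hKB]
    group
  refine ⟨A * KA⁻¹ * toPGL2 k (diagT k a) * KX,
    1 * toPGL2 k (diagT k b) * (KB⁻¹ * B), ?_, ?_, ?_⟩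
  · exact ⟨A * KA⁻¹, KX, mul_mem hA (inv_mem hKAm), hKXm, by group⟩
  · exact ⟨1, KB⁻¹ * B, one_mem _, mul_mem (inv_mem hKBm) hB, rfl⟩
  · rw [hk]; group

lemma le_list_sum {l : List ℕ} {x : ℕ} (hx : x ∈ l) : x ≤ l.sum := by
  induction l with
  | nil => simp at hx
  | cons a l ih =>
    rcases hx with _ | hx
    · simp
    · have := ih (by assumption)
      simp only [List.sum_cons]
      omega

/-- Main combinatorial induction, in list form. -/
lemma list_main : ∀ (n : ℕ) (l : List ℕ), l.length = n → l ≠ [] →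
    (∀ x ∈ l, 2 * x ≤ l.sum) → l.sum % 2 = 0 →
    ∃ gl : List (PGL2 k), List.Forall₂ (fun u g => g ∈ DC k u) l gl ∧ gl.prod = 1 := by
  intro n
  induction n using Nat.strong_induction_on with
  | _ n ih =>
    intro l hlen hne htri heven
    match l, hne with
    | [u], _ =>
      have hu : u = 0 := by have := htri u (by simp); simp at this; omega
      subst hu
      exact ⟨[1], List.Forall₂.cons (one_mem_DC_zero k) List.Forall₂.nil, by simp⟩
    | a :: b :: l', _ =>
      -- merge the first two sides into one of length c
      have hsum : (a :: b :: l').sum = a + b + l'.sum := by simp [add_assoc]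
      have hta : 2 * a ≤ a + b + l'.sum := by have := htri a (by simp); omega
      have htb : 2 * b ≤ a + b + l'.sum := by have := htri b (by simp); omega
      have hev : (a + b + l'.sum) % 2 = 0 := by rw [hsum] at heven; omega
      set c := min (a + b) l'.sum with hcdef
      set m := (a + b - c) / 2 with hmdef
      have hc2m : c + 2 * m = a + b := by omega
      have hma : m ≤ a := by omega
      have hmb : m ≤ b := by omega
      have hnew_sum : (c :: l').sum = c + l'.sum := by simp
      have hnew_tri : ∀ x ∈ (c :: l'), 2 * x ≤ (c :: l').sum := by
        intro x hx
        rcases hx with _ | hx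
        · simp only [hnew_sum]; omega
        · have h1 : 2 * x ≤ a + b + l'.sum := by
            have := htri x (by simp [List.mem_cons]; tauto)
            omega
          have h2 : x ≤ l'.sum := le_list_sum (by assumption)
          simp only [hnew_sum]; omega
      have hnew_even : (c :: l').sum % 2 = 0 := by simp only [hnew_sum]; omega
      have hlt : (c :: l').length < n := by simp at hlen ⊢; omega
      obtain ⟨gl, hF, hprod⟩ := ih _ hlt (c :: l') rfl (by simp) hnew_tri hnew_even
      rcases hF with - | @⟨_, g₀, _, gl', hg₀, hF'⟩
      obtain ⟨g₁, g₂, hg₁, hg₂, hsplit⟩ := split_DC k a b c m hc2m hma hmb hg₀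
      refine ⟨g₁ :: g₂ :: gl', List.Forall₂.cons hg₁ (List.Forall₂.cons hg₂ hF'), ?_⟩
      have : (g₁ :: g₂ :: gl').prod = (g₁ * g₂) * gl'.prod := by
        simp [mul_assoc]
      rw [this, ← hsplit]
      simpa [mul_assoc] using hprod

end Aux

/-- Special `r`-gons in the Bruhat–Tits tree of `PGL₂`.
Let `u₁, …, u_r` be nonnegative integers satisfying the generalized triangle inequalities
`uᵢ ≤ Σ_{j ≠ i} uⱼ` for every `i`, with `Σ uᵢ` even.  Then there exists a special `r`-gon
in the Bruhat–Tits tree of `PGL₂` over `k((t))` with side lengths `u₁, …, u_r`;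
equivalently, the identity lies in the product of double cosets
`Kμ₁K · Kμ₂K ⋯ Kμ_rK ⊆ PGL₂(k((t)))`, where `μᵢ` is the image of `diag(t^{uᵢ}, 1)`. -/
theorem special_r_gons_in_PGL2_tree
    (k : Type) [Field k] [IsAlgClosed k]
    (r : ℕ) (hr : 0 < r) (u : Fin r → ℕ)
    (htri : ∀ i, u i ≤ ∑ j ∈ Finset.univ.erase i, u j)
    (heven : (∑ i, u i) % 2 = 0) :
    ∃ g : Fin r → PGL2 k,
      (∀ i, ∃ a b : PGL2 k, a ∈ Ksub k ∧ b ∈ Ksub k ∧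
        g i = a * toPGL2 k (diagT k (u i)) * b) ∧
      (List.ofFn g).prod = 1 := by
  set l := List.ofFn u with hl
  have hsum : l.sum = ∑ i, u i := by simp [hl, List.sum_ofFn]
  have hne : l ≠ [] := by
    simp [hl, List.ofFn_eq_nil_iff]
    omega
  have htri' : ∀ x ∈ l, 2 * x ≤ l.sum := by
    intro x hx
    rw [hl, List.mem_ofFn] at hx
    obtain ⟨i, rfl⟩ := hx
    have h1 := htri i
    have h2 : ∑ j ∈ Finset.univ.erase i, u j + u i = ∑ j, u j :=
      Finset.sum_erase_add _ _ (Finset.mem_univ i)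
    rw [hsum]
    omega
  obtain ⟨gl, hF, hprod⟩ := list_main k l.length l rfl hne htri' (by rw [hsum]; exact heven)
  have hlen : gl.length = r := by
    have := hF.length_eq
    simp [hl] at this
    omega
  refine ⟨fun i => gl.get (Fin.cast hlen.symm i), ?_, ?_⟩
  · intro i
    have hget := (List.forall₂_iff_get.mp hF).2 i (by simp [hl]) (by omega)
    have : l.get ⟨i, by simp [hl]⟩ = u i := by simp [hl]
    rw [this] at hget
    exact hget
  · have : List.ofFn (fun i => gl.get (Fin.cast hlen.symm i)) = gl := by
      refine List.ext_get (by simp [hlen]) ?_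
      intro i h1 h2
      simp [List.get_ofFn]
    rw [this, hprod]
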